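/- arXiv:2010.02518 — 5 statements merged into one kernel-verified Lean document; each statement's English description precedes it below -/
import Mathlib

section
/- Let $n \ge d \ge 2$ and let $M$ be a $t \times n$ binary matrix with column set $\mathcal{F}$. Then $M$ is a $d$-SSM (i.e., for every $\mathcal{F}_0 \subseteq \mathcal{F}$ with $|\mathcal{F}_0| = d$, the intersection of all subsets $\mathcal{F}' \subseteq \mathcal{F}$ whose Boolean sum equals the Boolean sum of $\mathcal{F}_0$ equals $\mathcal{F}_0$) if and only if $M$ is a $\bar{d}$-SSM (the same condition holds for every $\mathcal{F}_0$ with $1 \le |\mathcal{F}_0| \le d$). -/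
/-- The Boolean sum (coordinatewise OR) of a set of binary columns. -/
noncomputable def boolSum {t : ℕ} (F : Finset (Fin t → Bool)) : Fin t → Bool := F.sup id

/-- `F` is a `d`-SSM: for every `F₀ ⊆ F` with `|F₀| = d`, the intersection of all
subsets of `F` whose Boolean sum equals that of `F₀` is exactly `F₀`. -/
def IsSSM {t : ℕ} (F : Finset (Fin t → Bool)) (d : ℕ) : Prop :=
  ∀ F0 ⊆ F, F0.card = d →
    {c : Fin t → Bool | ∀ F' ⊆ F, boolSum F' = boolSum F0 → c ∈ F'} = (F0 : Set (Fin t → Bool))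

/-- `F` is a `d̄`-SSM: the same condition for every `F₀` with `1 ≤ |F₀| ≤ d`. -/
def IsBarSSM {t : ℕ} (F : Finset (Fin t → Bool)) (d : ℕ) : Prop :=
  ∀ F0 ⊆ F, 1 ≤ F0.card → F0.card ≤ d →
    {c : Fin t → Bool | ∀ F' ⊆ F, boolSum F' = boolSum F0 → c ∈ F'} = (F0 : Set (Fin t → Bool))

lemma cond_iff {t : ℕ} (F F0 : Finset (Fin t → Bool)) (h : F0 ⊆ F) :
    ({c : Fin t → Bool | ∀ F' ⊆ F, boolSum F' = boolSum F0 → c ∈ F'}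
      = (F0 : Set (Fin t → Bool))) ↔
    (∀ F' ⊆ F, boolSum F' = boolSum F0 → F0 ⊆ F') := by
  constructor
  · intro he F' hF' hs x hx
    have hx' : x ∈ ({c : Fin t → Bool | ∀ F' ⊆ F, boolSum F' = boolSum F0 → c ∈ F'}) := by
      rw [he]; exact hx
    exact hx' F' hF' hs
  · intro hall
    ext c
    simp only [Set.mem_setOf_eq, Finset.mem_coe]
    constructor
    · intro hc; exact hc F0 h rfl
    · intro hc F' hF' hs; exact hall F' hF' hs hc

/-- A `t × n` binary matrix with `n ≥ d ≥ 2` is a `d`-SSM iff it is a `d̄`-SSM. -/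
theorem ssm_iff_barSSM {t n d : ℕ} (hd : 2 ≤ d) (hn : d ≤ n)
    (F : Finset (Fin t → Bool)) (hcard : F.card = n) :
    IsSSM F d ↔ IsBarSSM F d := by
  constructor
  · intro hF F0 hF0 h1 hk
    rw [cond_iff F F0 hF0]
    intro F' hF' hs
    obtain ⟨G, hFG, hGF, hGcard⟩ :=
      Finset.exists_subsuperset_card_eq hF0 hk (by omega)
    have key := hF G hGF hGcard
    rw [cond_iff F G hGF] at key
    have hsum : boolSum (F' ∪ (G \ F0)) = boolSum G := by
      unfold boolSum at *
      rw [Finset.sup_union, hs, ← Finset.sup_union, Finset.union_sdiff_of_subset hFG]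
    have hsub : G ⊆ F' ∪ (G \ F0) :=
      key _ (Finset.union_subset hF' (Finset.sdiff_subset.trans hGF)) hsum
    intro x hx
    rcases Finset.mem_union.mp (hsub (hFG hx)) with h | h
    · exact h
    · exact absurd (Finset.mem_sdiff.mp h).2 (by simp [hx])
  · intro hF F0 hF0 hc
    exact hF F0 hF0 (by omega) (le_of_eq hc)
end

section
/- Every $d$-SSM is a $\bar{d}$-separable matrix: if $M$ is a $t \times n$ binary matrix (with $n \ge d \ge 2$) that is a $d$-SSM, then the Boolean sums of all column subsets of size at most $d$ (and at least $1$) are pairwise distinct; i.e., if $\mathcal{F}_1, \mathcal{F}_2$ are subsets of columns with $1 \le |\mathcal{F}_1|, |\mathcal{F}_2| \le d$ and $\bigvee \mathcal{F}_1 = \bigvee \mathcal{F}_2$, then $\mathcal{F}_1 = \mathcal{F}_2$. -/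
/-- A `d`-SSM is a `d̄`-SSM. -/
lemma ssm_dbar {t n d : ℕ} (hn : d ≤ n)
    (F : Finset (Fin t → Bool)) (hcard : F.card = n) (hssm : IsSSM F d) :
    ∀ F0 ⊆ F, ∀ F' ⊆ F, F0.card ≤ d → boolSum F' = boolSum F0 → F0 ⊆ F' := by
  intro F0 hF0 F' hF' hF0d hsum
  have hUF : F0 ∪ F' ⊆ F := Finset.union_subset hF0 hF'
  by_cases hc : d ≤ (F0 ∪ F').card
  · obtain ⟨D, hF0D, hDU, hDcard⟩ :=
      Finset.exists_subsuperset_card_eq (Finset.subset_union_left (s₂ := F')) hF0d hc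
    have hDF : D ⊆ F := hDU.trans hUF
    have hsumD : boolSum D = boolSum F0 := by
      apply le_antisymm
      · calc boolSum D ≤ boolSum (F0 ∪ F') := Finset.sup_mono hDU
          _ = boolSum F0 ⊔ boolSum F' := Finset.sup_union
          _ = boolSum F0 := by rw [hsum, sup_idem]
      · exact Finset.sup_mono hF0D
    intro c hc0
    have hmem : c ∈ {c : Fin t → Bool | ∀ F'' ⊆ F, boolSum F'' = boolSum D → c ∈ F''} := by
      rw [hssm D hDF hDcard]; exact hF0D hc0
    exact hmem F' hF' (hsum.trans hsumD.symm)
  · push_neg at hc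
    have hle : d - (F0 ∪ F').card ≤ (F \ (F0 ∪ F')).card := by
      rw [Finset.card_sdiff_of_subset hUF, hcard]; omega
    obtain ⟨S, hS, hScard⟩ := Finset.exists_subset_card_eq hle
    have hSF : S ⊆ F := hS.trans (Finset.sdiff_subset)
    set D := (F0 ∪ F') ∪ S with hD
    have hdisj : Disjoint (F0 ∪ F') S :=
      Finset.disjoint_left.mpr (fun a ha hs => (Finset.mem_sdiff.mp (hS hs)).2 ha)
    have hDcard : D.card = d := by
      rw [hD, Finset.card_union_of_disjoint hdisj]; omega
    have hDF : D ⊆ F := Finset.union_subset hUF hSF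
    have hsumD : boolSum (F' ∪ S) = boolSum D := by
      simp only [hD, boolSum, Finset.sup_union]
      simp only [show F'.sup id = F0.sup id from hsum, sup_idem, sup_assoc]
    intro c hc0
    have hmem : c ∈ {c : Fin t → Bool | ∀ F'' ⊆ F, boolSum F'' = boolSum D → c ∈ F''} := by
      rw [hssm D hDF hDcard]
      exact Finset.mem_union_left _ (Finset.mem_union_left _ hc0)
    have hcF'S := hmem (F' ∪ S) (Finset.union_subset hF' hSF) hsumD
    rcases Finset.mem_union.mp hcF'S with h | h
    · exact h
    · exact absurd h (Finset.disjoint_left.mp hdisj (Finset.mem_union_left _ hc0))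

/-- Every `d`-SSM is a `d̄`-separable matrix: Boolean sums of column subsets of
size between `1` and `d` are pairwise distinct. -/
theorem ssm_isSeparable {t n d : ℕ} (hd : 2 ≤ d) (hn : d ≤ n)
    (F : Finset (Fin t → Bool)) (hcard : F.card = n) (hssm : IsSSM F d) :
    ∀ F1 ⊆ F, ∀ F2 ⊆ F, 1 ≤ F1.card → F1.card ≤ d → 1 ≤ F2.card → F2.card ≤ d →
      boolSum F1 = boolSum F2 → F1 = F2 := by
  intro F1 hF1 F2 hF2 _ hF1d _ hF2d hsum
  exact le_antisymm
    (ssm_dbar hn F hcard hssm F1 hF1 F2 hF2 hF1d hsum.symm)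
    (ssm_dbar hn F hcard hssm F2 hF2 F1 hF1 hF2d hsum)
end

section
/- Correctness of the SSM identification rule: let $M$ be a $t \times n$ binary matrix which is a $d$-SSM with columns $\vec{c}_1, \dots, \vec{c}_n$, let $P_0 \subseteq [n]$ be the set of positives with $1 \le |P_0| \le d$, and let $\vec{r} = \bigvee_{j \in P_0} \vec{c}_j$. Define $S = \{j \in [n] : \vec{c}_j \text{ is covered by } \vec{r}\}$ and $P = \{j \in S : \exists i \in [t], \vec{c}_j(i) = 1 \text{ and } \vec{c}_l(i) = 0 \text{ for all } l \in S \setminus \{j\}\}$. Then $P = P_0$. -/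
lemma sup_bool_iff {α : Type*} (s : Finset α) (g : α → Bool) :
    s.sup g = true ↔ ∃ a ∈ s, g a = true := by
  constructor
  · intro h
    by_contra hc
    push_neg at hc
    have : s.sup g = false := (Finset.sup_eq_bot_iff g s).mpr (fun a ha => by
      have := hc a ha; simpa using this)
    simp [this] at h
  · rintro ⟨a, ha, hga⟩
    have h := Finset.le_sup (f := g) ha
    rw [hga] at h
    exact le_antisymm (by simp) h

/-- Correctness of the SSM identification algorithm: given a `d`-SSM testing matrix
with (distinct) columns `c 1, …, c n`, a set `P₀` of at most `d` positives with
outcome `r = ⋁_{j ∈ P₀} c j`, the algorithm's output `P` (covered columns having a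
private coordinate among the covered columns) equals `P₀`. -/
theorem ssm_identification_correct {t n d : ℕ}
    (c : Fin n → Fin t → Bool) (hinj : Function.Injective c)
    (hssm : ∀ F0 ⊆ Finset.univ.image c, 1 ≤ F0.card → F0.card ≤ d →
      ∀ F' ⊆ Finset.univ.image c, boolSum F' = boolSum F0 → F0 ⊆ F')
    (P0 : Finset (Fin n)) (h1 : 1 ≤ P0.card) (h2 : P0.card ≤ d)
    (r : Fin t → Bool) (hr : r = P0.sup c)
    (S : Finset (Fin n))
    (hS : S = Finset.univ.filter (fun j => ∀ i, c j i = true → r i = true))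
    (P : Finset (Fin n))
    (hP : P = S.filter (fun j => ∃ i, c j i = true ∧ ∀ l ∈ S, l ≠ j → c l i = false)) :
    P = P0 := by
  have hrt : ∀ i, r i = true ↔ ∃ m ∈ P0, c m i = true := by
    intro i
    rw [hr, Finset.sup_apply]
    exact sup_bool_iff _ _
  have hP0S : P0 ⊆ S := by
    intro m hm
    rw [hS, Finset.mem_filter]
    exact ⟨Finset.mem_univ _, fun i h => (hrt i).mpr ⟨m, hm, h⟩⟩
  ext j
  rw [hP, Finset.mem_filter]
  constructor
  · rintro ⟨hjS, i, hji, hpriv⟩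
    by_contra hjP0
    rw [hS, Finset.mem_filter] at hjS
    obtain ⟨l, hl, hcl⟩ := (hrt i).mp (hjS.2 i hji)
    have hlne : l ≠ j := fun h => hjP0 (h ▸ hl)
    have := hpriv l (hP0S hl) hlne
    rw [hcl] at this
    exact absurd this (by simp)
  · intro hj
    refine ⟨hP0S hj, ?_⟩
    by_contra hno
    push_neg at hno
    -- hno : ∀ i, c j i = true → ∃ l ∈ S, l ≠ j ∧ c l i ≠ false
    have hF0sub : P0.image c ⊆ Finset.univ.image c :=
      Finset.image_subset_image (Finset.subset_univ _)
    have hcard : (P0.image c).card = P0.card := Finset.card_image_of_injective _ hinj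
    have hF'sub : (S \ {j}).image c ⊆ Finset.univ.image c :=
      Finset.image_subset_image (Finset.subset_univ _)
    have hsum : boolSum ((S \ {j}).image c) = boolSum (P0.image c) := by
      unfold boolSum
      rw [Finset.sup_image, Finset.sup_image]
      funext i
      rw [Bool.eq_iff_iff]
      rw [Finset.sup_apply, Finset.sup_apply, sup_bool_iff, sup_bool_iff]
      constructor
      · rintro ⟨l, hl, hcl⟩
        rw [Finset.mem_sdiff] at hl
        have hlS := hl.1
        rw [hS, Finset.mem_filter] at hlS
        exact (hrt i).mp (hlS.2 i hcl)
      · rintro ⟨m, hm, hcm⟩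
        by_cases hmj : m = j
        · subst hmj
          obtain ⟨l, hlS, hlne, hcl⟩ := hno i hcm
          refine ⟨l, Finset.mem_sdiff.mpr ⟨hlS, by simpa using hlne⟩, ?_⟩
          simpa using hcl
        · exact ⟨m, Finset.mem_sdiff.mpr ⟨hP0S hm, by simpa using hmj⟩, hcm⟩
    have hsub := hssm _ hF0sub (by rw [hcard]; exact h1) (by rw [hcard]; exact h2)
      _ hF'sub hsum
    have hmem : c j ∈ (S \ {j}).image c := hsub (Finset.mem_image_of_mem c hj)
    obtain ⟨l, hl, hcl⟩ := Finset.mem_image.mp hmem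
    have hlj : l = j := hinj hcl
    rw [hlj, Finset.mem_sdiff] at hl
    simp at hl
end

section
/- If $M$ is a $d$-SSM of size $t \times n$, then the set of its columns, viewed as a binary code of length $t$ and size $n$, is a strongly $\bar{d}$-separable code ($\bar{d}$-SSC): for every subset $\mathcal{C}_0$ of codewords with $1 \le |\mathcal{C}_0| \le d$, the intersection of all $\mathcal{C}' \subseteq \mathcal{C}$ with $\mathrm{desc}(\mathcal{C}') = \mathrm{desc}(\mathcal{C}_0)$ equals $\mathcal{C}_0$. -/
/-- The descendant code of a set of codewords, as a set of words. -/
def desc {t : ℕ} {α : Type*} (A : Finset (Fin t → α)) : Set (Fin t → α) :=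
  {x | ∀ i, ∃ c ∈ A, x i = c i}

lemma subset_desc {t : ℕ} {α : Type*} (A : Finset (Fin t → α)) :
    ∀ c ∈ A, c ∈ desc A := fun c hc i => ⟨c, hc, rfl⟩

lemma boolSum_apply_eq_true {t : ℕ} (A : Finset (Fin t → Bool)) (i : Fin t) :
    boolSum A i = true ↔ ∃ c ∈ A, c i = true := by
  unfold boolSum
  rw [Finset.sup_apply]
  constructor
  · intro h
    by_contra hc
    push_neg at hc
    have hb : (A.sup fun a => a i) = ⊥ := by
      rw [Finset.sup_eq_bot_iff]
      intro c hc'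
      exact Bool.eq_false_iff.mpr (hc c hc')
    simp [hb] at h
  · rintro ⟨c, hc, hci⟩
    have h2 := Finset.le_sup (f := fun c : Fin t → Bool => c i) hc
    simp only [id]
    simp only [hci] at h2
    exact top_le_iff.mp h2

lemma boolSum_mem_desc {t : ℕ} {A : Finset (Fin t → Bool)} (hA : A.Nonempty) :
    boolSum A ∈ desc A := by
  intro i
  cases h : boolSum A i with
  | true =>
    obtain ⟨c, hc, hci⟩ := (boolSum_apply_eq_true A i).mp h
    exact ⟨c, hc, hci.symm⟩
  | false =>
    obtain ⟨c, hc⟩ := hA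
    refine ⟨c, hc, ?_⟩
    cases hci : c i with
    | false => rfl
    | true =>
      exact absurd ((boolSum_apply_eq_true A i).mpr ⟨c, hc, hci⟩) (by simp [h])

lemma boolSum_eq_of_desc_eq {t : ℕ} {A B : Finset (Fin t → Bool)}
    (hA : A.Nonempty) (hB : B.Nonempty) (h : desc A = desc B) :
    boolSum A = boolSum B := by
  funext i
  have key : ∀ (C : Finset (Fin t → Bool)), C.Nonempty →
      (boolSum C i = true ↔ ∃ x ∈ desc C, x i = true) := by
    intro C hC
    constructor
    · intro hi
      exact ⟨boolSum C, boolSum_mem_desc hC, hi⟩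
    · rintro ⟨x, hx, hxi⟩
      obtain ⟨c, hc, hxc⟩ := hx i
      exact (boolSum_apply_eq_true C i).mpr ⟨c, hc, hxc ▸ hxi⟩
  have : boolSum A i = true ↔ boolSum B i = true := by
    rw [key A hA, key B hB, h]
  cases hA' : boolSum A i with
  | true => exact (this.mp hA').symm
  | false =>
    cases hB' : boolSum B i with
    | true => exact absurd (this.mpr hB') (by simp [hA'])
    | false => rfl

/-- The column set of a `d`-SSM, viewed as a binary code, is a strongly
`d̄`-separable code. -/
theorem ssm_columns_are_ssc {t n d : ℕ} (hd : 2 ≤ d) (hn : d ≤ n)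
    (F : Finset (Fin t → Bool)) (hcard : F.card = n)
    (hssm : ∀ F0 ⊆ F, 1 ≤ F0.card → F0.card ≤ d →
      ∀ F' ⊆ F, boolSum F' = boolSum F0 → F0 ⊆ F') :
    ∀ C0 ⊆ F, 1 ≤ C0.card → C0.card ≤ d →
      {x : Fin t → Bool | ∀ C' ⊆ F, desc C' = desc C0 → x ∈ C'} =
        (C0 : Set (Fin t → Bool)) := by
  intro C0 hC0 h1 hd'
  -- t ≥ 1
  have ht : 1 ≤ t := by
    by_contra ht
    push_neg at ht
    interval_cases t
    have : F.card ≤ Fintype.card (Fin 0 → Bool) := Finset.card_le_univ F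
    simp [Fintype.card_fun] at this
    omega
  have hC0ne : C0.Nonempty := Finset.card_pos.mp h1
  ext x
  simp only [Set.mem_setOf_eq, Finset.coe_subset, Finset.mem_coe]
  constructor
  · intro h
    exact h C0 hC0 rfl
  · intro hx C' hC' hdesc
    -- C' is nonempty
    have hC'ne : C'.Nonempty := by
      by_contra hne
      rw [Finset.not_nonempty_iff_eq_empty] at hne
      obtain ⟨c, hc⟩ := hC0ne
      have : c ∈ desc C' := by
        rw [hdesc]; exact subset_desc C0 c hc
      obtain ⟨c', hc', -⟩ := this ⟨0, ht⟩
      simp [hne] at hc'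
    have hsum := boolSum_eq_of_desc_eq hC'ne hC0ne hdesc
    exact hssm C0 hC0 h1 hd' C' hC' hsum hx
end

section
/- In a $d$-SSM with $n \ge d \ge 2$ and at least $d+1$ columns, no column is covered by the Boolean sum of any other single set of $d$ columns in the following strong sense: if $\mathcal{F}_0$ is a set of $d$ columns and $\mathcal{F}'$ is any set of columns with $\bigvee \mathcal{F}' = \bigvee \mathcal{F}_0$, then for every $\vec{c} \in \mathcal{F}_0$ there exists a coordinate $i$ such that $\vec{c}(i) = 1$ and $\vec{x}(i) = 0$ for all $\vec{x} \in \mathcal{F}_S \setminus \{\vec{c}\}$, where $\mathcal{F}_S$ is the set of all columns covered by $\bigvee \mathcal{F}_0$. -/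
lemma boolSum_true_iff {t : ℕ} (F : Finset (Fin t → Bool)) (i : Fin t) :
    boolSum F i = true ↔ ∃ x ∈ F, x i = true := by
  classical
  unfold boolSum
  induction F using Finset.induction with
  | empty => simp [Finset.sup_empty]
  | insert _ _ h ih =>
      simp only [Finset.sup_insert, Finset.mem_insert]
      constructor
      · intro hs
        rcases Bool.or_eq_true_iff.mp hs with h1 | h2
        · exact ⟨_, Or.inl rfl, h1⟩
        · obtain ⟨x, hx, hxi⟩ := ih.mp h2
          exact ⟨x, Or.inr hx, hxi⟩
      · rintro ⟨x, hx | hx, hxi⟩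
        · subst hx; exact Bool.or_eq_true_iff.mpr (Or.inl hxi)
        · exact Bool.or_eq_true_iff.mpr (Or.inr (ih.mpr ⟨x, hx, hxi⟩))

lemma boolSum_mem_le {t : ℕ} {F : Finset (Fin t → Bool)} {x : Fin t → Bool}
    (hx : x ∈ F) (i : Fin t) (hxi : x i = true) : boolSum F i = true :=
  (boolSum_true_iff F i).mpr ⟨x, hx, hxi⟩

/-- Key step of the identification algorithm: in a `d`-SSM, each column of the
actual positive set `F₀` has a private coordinate among all columns covered by
the Boolean sum of `F₀`. -/
theorem ssm_private_coordinate {t n d : ℕ} (hd : 2 ≤ d) (hn : d + 1 ≤ n)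
    (F : Finset (Fin t → Bool)) (hcard : F.card = n)
    (hssm : ∀ F0 ⊆ F, 1 ≤ F0.card → F0.card ≤ d →
      ∀ F' ⊆ F, boolSum F' = boolSum F0 → F0 ⊆ F')
    (F0 : Finset (Fin t → Bool)) (hF0 : F0 ⊆ F) (hF0card : F0.card = d)
    (F' : Finset (Fin t → Bool)) (hF' : F' ⊆ F)
    (hsum : boolSum F' = boolSum F0) :
    ∀ c ∈ F0, ∃ i, c i = true ∧
      ∀ x ∈ (F.filter fun x => ∀ i', x i' = true → boolSum F0 i' = true).erase c,
        x i = false := by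
  classical
  intro c hc
  by_contra hcon
  push_neg at hcon
  set T := (F.filter fun x => ∀ i', x i' = true → boolSum F0 i' = true).erase c with hT
  -- from hcon: for each i with c i = true, some x ∈ T has x i = true
  have hkey : ∀ i, c i = true → ∃ x ∈ T, x i = true := by
    intro i hci
    obtain ⟨x, hx, hxi⟩ := hcon i hci
    exact ⟨x, hx, by simpa using hxi⟩
  have hTF : T ⊆ F := (Finset.erase_subset _ _).trans (Finset.filter_subset _ _)
  -- boolSum T = boolSum F0
  have hsumT : boolSum T = boolSum F0 := by
    funext i
    by_cases h0 : boolSum F0 i = true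
    · obtain ⟨y, hy, hyi⟩ := (boolSum_true_iff F0 i).mp h0
      rw [h0]
      by_cases hyc : y = c
      · subst hyc
        obtain ⟨x, hx, hxi⟩ := hkey i hyi
        exact boolSum_mem_le hx i hxi
      · have hyT : y ∈ T := by
          rw [hT]
          refine Finset.mem_erase.mpr ⟨hyc, Finset.mem_filter.mpr ⟨hF0 hy, ?_⟩⟩
          intro i' hyi'
          exact boolSum_mem_le hy i' hyi'
        exact boolSum_mem_le hyT i hyi
    · have hT0 : boolSum T i ≠ true := by
        intro h
        obtain ⟨x, hx, hxi⟩ := (boolSum_true_iff T i).mp h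
        have hxmem := Finset.mem_of_mem_erase hx
        have := (Finset.mem_filter.mp hxmem).2 i hxi
        exact h0 this
      simp only [Bool.not_eq_true] at hT0 h0
      rw [hT0, h0]
  have hF0T : F0 ⊆ T :=
    hssm F0 hF0 (by omega) (by omega) T hTF hsumT
  have : c ∈ T := hF0T hc
  exact (Finset.mem_erase.mp this).1 rfl
end
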